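/- Let A be a real symmetric m×m positive definite matrix and v ∈ ℝ^m, and define x : ℝ → ℝ^m by x(t) = (tA + (1−t)I)^{1/2} v. Then for every t ∈ (0,1), x is differentiable at t with derivative x′(t) = −(1/2)(tA + (1−t)I)⁻¹ (I − A) x(t); together with x(0) = v, x solves the initial value problem of equation (3). -/

import Mathlib

open Matrix

namespace Matrix.PosSemidef

open scoped ComplexOrder

/-- The positive semidefinite square root of a positive semidefinite matrix
(the definition `Matrix.PosSemidef.sqrt` of the older Mathlib, since removed). -/
noncomputable def sqrt {n 𝕜 : Type*} [Fintype n] [RCLike 𝕜] [DecidableEq n]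
    {A : Matrix n n 𝕜} (hA : A.PosSemidef) : Matrix n n 𝕜 :=
  (hA.1.eigenvectorUnitary : Matrix n n 𝕜) * diagonal ((↑) ∘ (√·) ∘ hA.1.eigenvalues) *
    (star hA.1.eigenvectorUnitary : Matrix n n 𝕜)

end Matrix.PosSemidef

/-- Let `A` be a real symmetric `m × m` positive definite matrix and
`v ∈ ℝ^m`, and let `x : ℝ → ℝ^m` satisfy `x t = (t • A + (1 - t) • I)^{1/2} v` for
`t ∈ [0,1]`. Then for every `t ∈ (0,1)`, `x` is differentiable at `t` with derivative
`x'(t) = -(1/2) (t • A + (1 - t) • I)⁻¹ (I - A) x(t)`; together with `x 0 = v`, `x`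
solves the initial value problem of equation (3). -/
theorem sqrt_path_solves_ode (m : ℕ) (A : Matrix (Fin m) (Fin m) ℝ)
    (hA : A.IsSymm) (hpos : A.PosDef) (v : Fin m → ℝ)
    (h : ∀ t ∈ Set.Icc (0 : ℝ) 1,
      (t • A + (1 - t) • (1 : Matrix (Fin m) (Fin m) ℝ)).PosSemidef)
    (x : ℝ → Fin m → ℝ)
    (hx : ∀ t, ∀ ht : t ∈ Set.Icc (0 : ℝ) 1, x t = (h t ht).sqrt *ᵥ v) :
    (∀ t ∈ Set.Ioo (0 : ℝ) 1,
      HasDerivAt x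
        ((-(1 / 2 : ℝ)) • ((t • A + (1 - t) • (1 : Matrix (Fin m) (Fin m) ℝ))⁻¹ *ᵥ
          ((1 - A) *ᵥ x t))) t) ∧
    x 0 = v := by
  have hH : A.IsHermitian := hpos.isHermitian
  obtain ⟨U, hUdef⟩ : ∃ U : Matrix (Fin m) (Fin m) ℝ,
      U = (hH.eigenvectorUnitary : Matrix (Fin m) (Fin m) ℝ) := ⟨_, rfl⟩
  obtain ⟨lam, hlamdef⟩ : ∃ lam : Fin m → ℝ, lam = hH.eigenvalues := ⟨_, rfl⟩
  have hlam : ∀ i, 0 < lam i := hlamdef ▸ hpos.eigenvalues_pos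
  have hUU : star U * U = 1 := by
    rw [hUdef]; exact Unitary.coe_star_mul_self hH.eigenvectorUnitary
  have hUU' : U * star U = 1 := by
    rw [hUdef]; exact Unitary.coe_mul_star_self hH.eigenvectorUnitary
  obtain ⟨Φ, hΦdef⟩ : ∃ Φ : (ℝ → ℝ) → Matrix (Fin m) (Fin m) ℝ,
      Φ = fun f => U * diagonal (fun i => f (lam i)) * star U := ⟨_, rfl⟩
  have hcongr : ∀ f g : ℝ → ℝ, (∀ i, f (lam i) = g (lam i)) → Φ f = Φ g := by
    intro f g hfg
    simp only [hΦdef]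
    congr 2
    exact congrArg diagonal (funext hfg)
  have hmul : ∀ f g : ℝ → ℝ, Φ f * Φ g = Φ (fun s => f s * g s) := by
    intro f g
    simp only [hΦdef]
    simp only [Matrix.mul_assoc]
    rw [← Matrix.mul_assoc (star U) U, hUU, Matrix.one_mul,
      ← Matrix.mul_assoc (diagonal _) (diagonal _), diagonal_mul_diagonal]
  have hone : Φ (fun _ => 1) = 1 := by
    simp only [hΦdef, diagonal_one, Matrix.mul_one, hUU']
  have hΦA : Φ (fun s => s) = A := by
    conv_rhs => rw [hH.spectral_theorem]
    simp only [hΦdef, RCLike.ofReal_real_eq_id, Function.comp_def, id_eq, hUdef, hlamdef,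
      Unitary.conjStarAlgAut_apply]
  have hsmul : ∀ (c : ℝ) (f : ℝ → ℝ), c • Φ f = Φ (fun s => c * f s) := by
    intro c f
    simp only [hΦdef]
    rw [show (fun i => c * f (lam i)) = c • (fun i => f (lam i)) from rfl, diagonal_smul,
      Matrix.mul_smul, Matrix.smul_mul]
  have hsub : ∀ f g : ℝ → ℝ, Φ f - Φ g = Φ (fun s => f s - g s) := by
    intro f g
    simp only [hΦdef]
    rw [← Matrix.sub_mul, ← Matrix.mul_sub, diagonal_sub]
  have hadd : ∀ f g : ℝ → ℝ, Φ f + Φ g = Φ (fun s => f s + g s) := by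
    intro f g
    simp only [hΦdef]
    rw [← Matrix.add_mul, ← Matrix.mul_add, diagonal_add]
  have hMt : ∀ t : ℝ, t • A + (1 - t) • (1 : Matrix (Fin m) (Fin m) ℝ)
      = Φ (fun s => t * s + (1 - t)) := by
    intro t
    rw [← hΦA, ← hone, hsmul, hsmul, hadd]
    exact hcongr _ _ (fun i => by ring)
  have hherm : ∀ f : ℝ → ℝ, (Φ f).IsHermitian := by
    intro f
    show (Φ f)ᴴ = Φ f
    simp only [hΦdef]
    simp [star_eq_conjTranspose, conjTranspose_mul, diagonal_conjTranspose, Matrix.mul_assoc]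
  have hpsd : ∀ f : ℝ → ℝ, (∀ i, 0 ≤ f (lam i)) → (Φ f).PosSemidef := by
    intro f hf
    have h1 : Φ f = (Φ (fun s => Real.sqrt (f s)))ᴴ * Φ (fun s => Real.sqrt (f s)) := by
      rw [show (Φ (fun s => Real.sqrt (f s)))ᴴ = Φ (fun s => Real.sqrt (f s)) from hherm _, hmul]
      exact (hcongr _ _ (fun i => Real.mul_self_sqrt (hf i))).symm
    rw [h1]
    exact posSemidef_conjTranspose_mul_self _
  have hsq : ∀ t (ht : t ∈ Set.Icc (0:ℝ) 1),
      (h t ht).sqrt = Φ (fun s => Real.sqrt (t * s + (1 - t))) := by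
    intro t ht
    have hMh := (h t ht).1
    have e1 : (h t ht).sqrt
        = cfc Real.sqrt (t • A + (1 - t) • (1 : Matrix (Fin m) (Fin m) ℝ)) := by
      rw [hMh.cfc_eq]
      simp [Matrix.PosSemidef.sqrt, IsHermitian.cfc, Unitary.conjStarAlgAut_apply]
    have eΦ : ∀ f, Φ f = cfc f A := by
      intro f
      rw [hH.cfc_eq]
      simp [hΦdef, hUdef, hlamdef, IsHermitian.cfc, Unitary.conjStarAlgAut_apply,
        Function.comp_def]
    rw [e1, hMt, eΦ, eΦ]
    exact (cfc_comp Real.sqrt (fun s => t * s + (1 - t)) A hH).symm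
  obtain ⟨w, hwdef⟩ : ∃ w : Fin m → ℝ, w = star U *ᵥ v := ⟨_, rfl⟩
  have hvec : ∀ f : ℝ → ℝ, Φ f *ᵥ v = U *ᵥ (fun k => f (lam k) * w k) := by
    intro f
    have hdiag : ∀ (d y : Fin m → ℝ), diagonal d *ᵥ y = fun k => d k * y k := by
      intro d y; funext k; rw [mulVec_diagonal]
    simp only [hΦdef, hwdef, ← mulVec_mulVec, hdiag]
  have hx0 : x 0 = v := by
    rw [hx 0 ⟨le_refl 0, zero_le_one⟩, hsq 0 ⟨le_refl 0, zero_le_one⟩,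
      hcongr _ (fun _ => 1) (fun i => by norm_num), hone, one_mulVec]
  refine ⟨?_, hx0⟩
  intro t ht
  have pos : ∀ k, 0 < t * lam k + (1 - t) := fun k =>
    add_pos (mul_pos ht.1 (hlam k)) (by linarith [ht.2])
  obtain ⟨g, hgdef⟩ : ∃ g : ℝ → Fin m → ℝ,
      g = fun s => U *ᵥ (fun k => Real.sqrt (s * lam k + (1 - s)) * w k) := ⟨_, rfl⟩
  have hxg : ∀ s ∈ Set.Icc (0:ℝ) 1, x s = g s := by
    intro s hs
    simp only [hx s hs, hsq s hs, hvec, hgdef]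
  have hg' : HasDerivAt g
      (U *ᵥ fun k => ((lam k - 1) / (2 * Real.sqrt (t * lam k + (1 - t)))) * w k) t := by
    rw [hasDerivAt_pi]
    intro i
    simp only [hgdef, mulVec, dotProduct]
    apply HasDerivAt.fun_sum
    intro k _
    have haff : HasDerivAt (fun s : ℝ => s * lam k + (1 - s)) (lam k - 1) t := by
      have h1 := (hasDerivAt_id t).mul_const (lam k)
      have h2 := (hasDerivAt_id t).const_sub (1 : ℝ)
      exact (h1.add h2).congr_deriv (by ring)
    have hsd := (Real.hasDerivAt_sqrt (ne_of_gt (pos k))).comp t haff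
    have hsd' : HasDerivAt (fun s : ℝ => Real.sqrt (s * lam k + (1 - s)))
        ((lam k - 1) / (2 * Real.sqrt (t * lam k + (1 - t)))) t := by
      exact hsd.congr_deriv (by ring)
    exact (hsd'.mul_const (w k)).const_mul (U i k)
  have hval : ((-(1 / 2 : ℝ)) • ((t • A + (1 - t) • (1 : Matrix (Fin m) (Fin m) ℝ))⁻¹ *ᵥ
          ((1 - A) *ᵥ x t)))
      = U *ᵥ fun k => ((lam k - 1) / (2 * Real.sqrt (t * lam k + (1 - t)))) * w k := by
    have hinv : (t • A + (1 - t) • (1 : Matrix (Fin m) (Fin m) ℝ))⁻¹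
        = Φ (fun s => (t * s + (1 - t))⁻¹) := by
      apply inv_eq_right_inv
      rw [hMt, hmul, ← hone]
      exact hcongr _ _ (fun i => mul_inv_cancel₀ (pos i).ne')
    have h1A : (1 : Matrix (Fin m) (Fin m) ℝ) - A = Φ (fun s => 1 - s) := by
      rw [← hone, ← hΦA, hsub]
    rw [hx t (Set.Ioo_subset_Icc_self ht), hsq t (Set.Ioo_subset_Icc_self ht), hinv, h1A,
      mulVec_mulVec, mulVec_mulVec, hmul, hmul, ← smul_mulVec, hsmul, hvec]
    refine congrArg (fun y => U *ᵥ y) (funext fun k => ?_)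
    have hX : (0:ℝ) < t * lam k + (1 - t) := pos k
    have hsX : Real.sqrt (t * lam k + (1 - t)) * Real.sqrt (t * lam k + (1 - t))
        = t * lam k + (1 - t) := Real.mul_self_sqrt hX.le
    have hsXpos : 0 < Real.sqrt (t * lam k + (1 - t)) := Real.sqrt_pos.2 hX
    congr 1
    generalize hr : Real.sqrt (t * lam k + (1 - t)) = r at hsX hsXpos ⊢
    rw [← hsX]
    have hrne : r ≠ 0 := hsXpos.ne'
    field_simp
    ring
  rw [hval]
  exact hg'.congr_of_eventuallyEq
    (Filter.eventuallyEq_of_mem (Ioo_mem_nhds ht.1 ht.2)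
      (fun s hs => hxg s (Set.Ioo_subset_Icc_self hs)))
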